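/- Strategy stealing for drawing strategies: let H = (V, E) be a finite hypergraph with E nonempty, and consider the game in which two players alternately claim previously unclaimed vertices, the first player moving first, until all vertices are claimed. If the second player has a strategy guaranteeing that the first player never claims all vertices of any edge of E, then the first player has a strategy guaranteeing that the second player never claims all vertices of any edge of E. -/

import Mathlib

namespace StealAux

variable {V : Type}

open Classical in
/-- Simulation of the imagined Breaker game, on reversed histories.
Input: reversed real history of odd length. Output: (imagined history, extra vertex). -/
noncomputable def simR (σ : List V → V) : List V → List V × V
  | [] => ([], σ [])
  | [v] => ([], v)
  | w :: x :: r =>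
      let p := simR σ r
      let y := σ (p.1 ++ [x])
      (p.1 ++ [x, y], if y = p.2 then w else p.2)

open Classical in
/-- The stolen strategy, as a function of (real history h, reversed h). -/
noncomputable def stealAux (σ fresh : List V → V) : List V → List V → V
  | _, [] => fresh []
  | h, x :: r =>
      let p := simR σ r
      let y := σ (p.1 ++ [x])
      let c := if y = p.2 then fresh h else y
      if c ∈ h then fresh h else c

noncomputable def steal (σ fresh : List V → V) (h : List V) : V :=
  stealAux σ fresh h h.reverse

lemma steal_legal (σ fresh : List V → V) (n : ℕ)
    (hfresh : ∀ h : List V, h.length < n → fresh h ∉ h)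
    (h : List V) (hlen : h.length < n) : steal σ fresh h ∉ h := by
  unfold steal
  rcases hr : h.reverse with _ | ⟨x, r⟩
  · have : h = [] := by simpa using congrArg List.reverse hr
    subst this
    simp [stealAux]
  · rw [stealAux]
    by_cases hm : (if σ ((simR σ r).1 ++ [x]) = (simR σ r).2 then fresh h
        else σ ((simR σ r).1 ++ [x])) ∈ h
    · rw [if_pos hm]; exact hfresh h hlen
    · rw [if_neg hm]; exact hm

lemma ofFn_take {α : Type*} (P : List α) (k : ℕ) (hk : k ≤ P.length) :
    List.ofFn (fun j : Fin k => P[j.1]'(j.2.trans_le hk)) = P.take k := by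
  apply List.ext_getElem
  · simp [Nat.min_eq_left hk]
  · intro i h1 h2
    simp

lemma take_succ_getElem {α : Type*} (P : List α) (k : ℕ) (hk : k < P.length) :
    P.take (k+1) = P.take k ++ [P[k]] := by
  rw [List.take_succ, List.getElem?_eq_getElem hk]
  rfl

lemma not_mem_take {α : Type*} (l : List α) (hl : l.Nodup) (k : ℕ) (hk : k < l.length) :
    l[k] ∉ l.take k := by
  intro hmem
  rw [List.mem_take_iff_getElem] at hmem
  obtain ⟨i, hi, hieq⟩ := hmem
  have : i = k := (hl.getElem_inj_iff).mp hieq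
  omega

end StealAux

namespace StealAux

variable {V : Type}

lemma ofFn_prefix {n : ℕ} (f : Fin n → V) (k : Fin n) :
    (List.ofFn fun j : Fin (k : ℕ) => f ⟨j.1, j.isLt.trans k.isLt⟩) = (List.ofFn f).take k := by
  apply List.ext_getElem
  · simp [Nat.min_eq_left (le_of_lt k.2)]
  · intro i h1 h2
    simp

/-- The invariant carried through the simulated game. -/
def InvP {n : ℕ} (σ : List V → V) (f : Fin n → V) (m : ℕ) : Prop :=
  ∃ im : List V, ∃ ex : V,
    simR σ (((List.ofFn f).take (2*m+1)).reverse) = (im, ex) ∧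
    im.length = 2*m ∧ im.Nodup ∧ ex ∉ im ∧
    (∀ v : V, (v ∈ im ∨ v = ex) ↔ v ∈ (List.ofFn f).take (2*m+1)) ∧
    (∀ j (hj : j < im.length), Odd j → im[j] = σ (im.take j)) ∧
    (∀ j (hj : j < im.length), Even j → ∀ h2 : j+1 < n, im[j] = f ⟨j+1, h2⟩)

end StealAux

namespace StealAux

variable {V : Type}

open Classical in
lemma invariant {n : ℕ} (σ fresh : List V → V)
    (hσ : ∀ h : List V, h.Nodup → Odd h.length → h.length < n → σ h ∉ h)
    (hfresh : ∀ h : List V, h.length < n → fresh h ∉ h)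
    (f : Fin n → V) (hinj : Function.Injective f)
    (hfol : ∀ k : Fin n, Even (k : ℕ) →
        f k = steal σ fresh (List.ofFn fun j : Fin (k : ℕ) => f ⟨j.1, j.isLt.trans k.isLt⟩)) :
    ∀ m : ℕ, 2*m+1 ≤ n → InvP σ f m := by
  have hlenL : (List.ofFn f).length = n := by simp
  have nodupL : (List.ofFn f).Nodup := List.nodup_ofFn.mpr hinj
  intro m
  induction m with
  | zero =>
    intro hm
    have h0 : 0 < (List.ofFn f).length := by rw [hlenL]; omega
    have h1 := take_succ_getElem (List.ofFn f) 0 h0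
    simp only [List.take_zero, List.nil_append, List.getElem_ofFn] at h1
    have h2 : (List.ofFn f).take (2*0+1) = [f ⟨0, by omega⟩] := by
      norm_num at h1 ⊢
      rw [h1]
    refine ⟨[], f ⟨0, by omega⟩, ?_, by simp, by simp, by simp, ?_, by simp, by simp⟩
    · rw [h2]; simp [simR]
    · intro v; rw [h2]; simp
  | succ m ih =>
    intro hm
    obtain ⟨im, ex, heq, A, B, C, D, E, F⟩ := ih (by omega)
    have hx1 : 2*m+1 < n := by omega
    have hx2 : 2*m+2 < n := by omega
    have hL1 : 2*m+1 < (List.ofFn f).length := by simpa using hx1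
    have hL2 : 2*m+2 < (List.ofFn f).length := by simpa using hx2
    have htake2 : (List.ofFn f).take (2*m+2)
        = (List.ofFn f).take (2*m+1) ++ [f ⟨2*m+1, hx1⟩] := by
      rw [take_succ_getElem _ _ hL1]
      simp only [List.getElem_ofFn]
    have htake3 : (List.ofFn f).take (2*m+3)
        = ((List.ofFn f).take (2*m+1) ++ [f ⟨2*m+1, hx1⟩]) ++ [f ⟨2*m+2, hx2⟩] := by
      rw [take_succ_getElem _ _ hL2, htake2]
      simp only [List.getElem_ofFn]
    have hxnot : f ⟨2*m+1, hx1⟩ ∉ (List.ofFn f).take (2*m+1) := by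
      have := not_mem_take (List.ofFn f) nodupL (2*m+1) hL1
      simp only [List.getElem_ofFn] at this
      exact this
    have hwnot : f ⟨2*m+2, hx2⟩ ∉ (List.ofFn f).take (2*m+2) := by
      have := not_mem_take (List.ofFn f) nodupL (2*m+2) hL2
      simp only [List.getElem_ofFn] at this
      exact this
    have himsub : ∀ v ∈ im, v ∈ (List.ofFn f).take (2*m+1) := fun v hv => (D v).mp (Or.inl hv)
    have hexmem : ex ∈ (List.ofFn f).take (2*m+1) := (D ex).mp (Or.inr rfl)
    have hxim : f ⟨2*m+1, hx1⟩ ∉ im := fun hc => hxnot (himsub _ hc)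
    have hnodup1 : (im ++ [f ⟨2*m+1, hx1⟩]).Nodup := by
      rw [List.nodup_append]
      exact ⟨B, List.nodup_singleton _, fun a ha b hb hab => by
        rw [List.mem_singleton] at hb; subst hb; subst hab; exact hxim ha⟩
    have hlen1 : (im ++ [f ⟨2*m+1, hx1⟩]).length = 2*m+1 := by simp [A]
    have hynot : σ (im ++ [f ⟨2*m+1, hx1⟩]) ∉ im ++ [f ⟨2*m+1, hx1⟩] :=
      hσ _ hnodup1 (by rw [hlen1]; exact ⟨m, by omega⟩) (by rw [hlen1]; omega)
    have hyim : σ (im ++ [f ⟨2*m+1, hx1⟩]) ∉ im := fun hc => hynot (by simp [hc])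
    have hyx : σ (im ++ [f ⟨2*m+1, hx1⟩]) ≠ f ⟨2*m+1, hx1⟩ := fun hc => hynot (by simp [hc])
    have hrev2 : ((List.ofFn f).take (2*m+2)).reverse
        = f ⟨2*m+1, hx1⟩ :: ((List.ofFn f).take (2*m+1)).reverse := by
      rw [htake2]; simp
    have hsteal : steal σ fresh ((List.ofFn f).take (2*m+2)) =
        (if (if σ (im ++ [f ⟨2*m+1, hx1⟩]) = ex
              then fresh ((List.ofFn f).take (2*m+2))
              else σ (im ++ [f ⟨2*m+1, hx1⟩])) ∈ (List.ofFn f).take (2*m+2)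
          then fresh ((List.ofFn f).take (2*m+2))
          else (if σ (im ++ [f ⟨2*m+1, hx1⟩]) = ex
              then fresh ((List.ofFn f).take (2*m+2))
              else σ (im ++ [f ⟨2*m+1, hx1⟩]))) := by
      rw [steal, hrev2, stealAux, heq]
    have hwsteal : f ⟨2*m+2, hx2⟩ = steal σ fresh ((List.ofFn f).take (2*m+2)) := by
      have h0 := hfol ⟨2*m+2, hx2⟩ ⟨m+1, by exact (by omega : 2*m+2 = (m+1)+(m+1))⟩
      rw [ofFn_prefix f ⟨2*m+2, hx2⟩] at h0
      exact h0
    have hmemh : ∀ v, v ∈ (List.ofFn f).take (2*m+2) ↔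
        (v ∈ im ∨ v = ex ∨ v = f ⟨2*m+1, hx1⟩) := by
      intro v
      rw [htake2]
      simp only [List.mem_append, List.mem_singleton]
      constructor
      · rintro (hv | hv)
        · rcases (D v).mpr hv with hv' | hv'
          · exact Or.inl hv'
          · exact Or.inr (Or.inl hv')
        · exact Or.inr (Or.inr hv)
      · rintro (hv | hv | hv)
        · exact Or.inl ((D v).mp (Or.inl hv))
        · exact Or.inl ((D v).mp (Or.inr hv))
        · exact Or.inr hv
    have hkey : (σ (im ++ [f ⟨2*m+1, hx1⟩]) = ex ∧
          f ⟨2*m+2, hx2⟩ = fresh ((List.ofFn f).take (2*m+2))) ∨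
        (σ (im ++ [f ⟨2*m+1, hx1⟩]) ≠ ex ∧
          f ⟨2*m+2, hx2⟩ = σ (im ++ [f ⟨2*m+1, hx1⟩])) := by
      by_cases hc : σ (im ++ [f ⟨2*m+1, hx1⟩]) = ex
      · refine Or.inl ⟨hc, ?_⟩
        rw [hwsteal, hsteal, if_pos hc]
        split <;> rfl
      · refine Or.inr ⟨hc, ?_⟩
        have hynoth : σ (im ++ [f ⟨2*m+1, hx1⟩]) ∉ (List.ofFn f).take (2*m+2) := by
          rw [hmemh]
          push_neg
          exact ⟨hyim, hc, hyx⟩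
        rw [hwsteal, hsteal, if_neg hc, if_neg hynoth]
    have hwnotp : f ⟨2*m+2, hx2⟩ ∉ im ++ [f ⟨2*m+1, hx1⟩] := by
      intro hc
      apply hwnot
      rw [htake2]
      rcases List.mem_append.mp hc with hc' | hc'
      · exact List.mem_append.mpr (Or.inl (himsub _ hc'))
      · exact List.mem_append.mpr (Or.inr hc')
    have hrev3 : ((List.ofFn f).take (2*(m+1)+1)).reverse
        = f ⟨2*m+2, hx2⟩ :: f ⟨2*m+1, hx1⟩ :: ((List.ofFn f).take (2*m+1)).reverse := by
      rw [show 2*(m+1)+1 = 2*m+3 from by omega, htake3]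
      simp
    have hsim3 : simR σ (((List.ofFn f).take (2*(m+1)+1)).reverse)
        = (im ++ [f ⟨2*m+1, hx1⟩, σ (im ++ [f ⟨2*m+1, hx1⟩])],
           if σ (im ++ [f ⟨2*m+1, hx1⟩]) = ex then f ⟨2*m+2, hx2⟩ else ex) := by
      rw [hrev3, simR, heq]
    have hdec : im ++ [f ⟨2*m+1, hx1⟩, σ (im ++ [f ⟨2*m+1, hx1⟩])]
        = (im ++ [f ⟨2*m+1, hx1⟩]) ++ [σ (im ++ [f ⟨2*m+1, hx1⟩])] := by simp
    have hlenq : (im ++ [f ⟨2*m+1, hx1⟩, σ (im ++ [f ⟨2*m+1, hx1⟩])]).length = 2*(m+1) := by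
      simp only [List.length_append, List.length_cons, List.length_nil, A]; omega
    have hnodupq : (im ++ [f ⟨2*m+1, hx1⟩, σ (im ++ [f ⟨2*m+1, hx1⟩])]).Nodup := by
      rw [hdec, List.nodup_append]
      exact ⟨hnodup1, List.nodup_singleton _, fun a ha b hb hab => by
        rw [List.mem_singleton] at hb; subst hb; subst hab; exact hynot ha⟩
    -- the E and F components for the new list
    have hE' : ∀ j (hj : j < (im ++ [f ⟨2*m+1, hx1⟩, σ (im ++ [f ⟨2*m+1, hx1⟩])]).length), Odd j →
        (im ++ [f ⟨2*m+1, hx1⟩, σ (im ++ [f ⟨2*m+1, hx1⟩])])[j]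
          = σ ((im ++ [f ⟨2*m+1, hx1⟩, σ (im ++ [f ⟨2*m+1, hx1⟩])]).take j) := by
      intro j hj hodd
      rw [hlenq] at hj
      by_cases hj1 : j < im.length
      · rw [List.getElem_append_left hj1, List.take_append_of_le_length (le_of_lt hj1)]
        exact E j hj1 hodd
      · have hj2 : j = 2*m+1 := by
          rcases hodd with ⟨t, ht⟩
          omega
        subst hj2
        have h1 : (im ++ [f ⟨2*m+1, hx1⟩, σ (im ++ [f ⟨2*m+1, hx1⟩])]).take (2*m+1)
            = im ++ [f ⟨2*m+1, hx1⟩] := by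
          rw [hdec, List.take_append_of_le_length (by rw [hlen1]),
            List.take_of_length_le (le_of_eq hlen1)]
        rw [h1, List.getElem_append_right (by omega)]
        simp [A]
    have hF' : ∀ j (hj : j < (im ++ [f ⟨2*m+1, hx1⟩, σ (im ++ [f ⟨2*m+1, hx1⟩])]).length), Even j →
        ∀ h2 : j+1 < n,
        (im ++ [f ⟨2*m+1, hx1⟩, σ (im ++ [f ⟨2*m+1, hx1⟩])])[j] = f ⟨j+1, h2⟩ := by
      intro j hj heven h2
      rw [hlenq] at hj
      by_cases hj1 : j < im.length
      · rw [List.getElem_append_left hj1]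
        exact F j hj1 heven h2
      · have hj2 : j = 2*m := by
          rcases heven with ⟨t, ht⟩
          omega
        subst hj2
        rw [List.getElem_append_right (by omega)]
        simp [A]
    have hmemq : ∀ v : V, v ∈ im ++ [f ⟨2*m+1, hx1⟩, σ (im ++ [f ⟨2*m+1, hx1⟩])] ↔
        (v ∈ im ∨ v = f ⟨2*m+1, hx1⟩ ∨ v = σ (im ++ [f ⟨2*m+1, hx1⟩])) := by
      intro v; simp
    have hmem3 : ∀ v : V, v ∈ (List.ofFn f).take (2*(m+1)+1) ↔
        ((v ∈ im ∨ v = ex) ∨ v = f ⟨2*m+1, hx1⟩ ∨ v = f ⟨2*m+2, hx2⟩) := by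
      intro v
      rw [show 2*(m+1)+1 = 2*m+3 from by omega, htake3]
      simp only [List.mem_append, List.mem_singleton]
      rw [← D v]
      exact or_assoc
    -- now assemble, by cases
    rcases hkey with ⟨hc, hw'⟩ | ⟨hc, hw'⟩
    · refine ⟨im ++ [f ⟨2*m+1, hx1⟩, σ (im ++ [f ⟨2*m+1, hx1⟩])], f ⟨2*m+2, hx2⟩,
        by rw [hsim3, if_pos hc], hlenq, hnodupq, ?_, ?_, hE', hF'⟩
      · intro hmem
        rw [hdec] at hmem
        rcases List.mem_append.mp hmem with hm' | hm'
        · exact hwnotp hm'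
        · rw [List.mem_singleton] at hm'
          apply hwnot
          rw [htake2]
          exact List.mem_append.mpr (Or.inl (by rw [hm', hc]; exact hexmem))
      · intro v
        rw [hmem3 v]
        constructor
        · rintro (hq | h)
          · rcases (hmemq v).mp hq with h|h|h
            · exact Or.inl (Or.inl h)
            · exact Or.inr (Or.inl h)
            · exact Or.inl (Or.inr (h.trans hc))
          · exact Or.inr (Or.inr h)
        · rintro ((h|h)|h|h)
          · exact Or.inl ((hmemq v).mpr (Or.inl h))
          · exact Or.inl ((hmemq v).mpr (Or.inr (Or.inr (h.trans hc.symm))))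
          · exact Or.inl ((hmemq v).mpr (Or.inr (Or.inl h)))
          · exact Or.inr h
    · refine ⟨im ++ [f ⟨2*m+1, hx1⟩, σ (im ++ [f ⟨2*m+1, hx1⟩])], ex,
        by rw [hsim3, if_neg hc], hlenq, hnodupq, ?_, ?_, hE', hF'⟩
      · intro hmem
        rw [hdec] at hmem
        rcases List.mem_append.mp hmem with hm' | hm'
        · rcases List.mem_append.mp hm' with hm'' | hm''
          · exact C hm''
          · rw [List.mem_singleton] at hm''
            exact hxnot (hm'' ▸ hexmem)
        · rw [List.mem_singleton] at hm'
          exact hc hm'.symm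
      · intro v
        rw [hmem3 v]
        constructor
        · rintro (hq | h)
          · rcases (hmemq v).mp hq with h|h|h
            · exact Or.inl (Or.inl h)
            · exact Or.inr (Or.inl h)
            · exact Or.inr (Or.inr (h.trans hw'.symm))
          · exact Or.inl (Or.inr h)
        · rintro ((h|h)|h|h)
          · exact Or.inl ((hmemq v).mpr (Or.inl h))
          · exact Or.inr h
          · exact Or.inl ((hmemq v).mpr (Or.inr (Or.inl h)))
          · exact Or.inl ((hmemq v).mpr (Or.inr (Or.inr (h.trans hw'))))

end StealAux

namespace StealAux

variable {V : Type}

/-- Packaging the final contradiction: from a suitable complete imagined play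
list `P`, contradict Breaker's winning strategy. -/
lemma finish [Fintype V] (E : Finset V → Prop) (σ : List V → V) (P : List V)
    (hnodup : P.Nodup) (hlen : P.length = Fintype.card V)
    (hfolP : ∀ j (hj : j < P.length), Odd j → P[j] = σ (P.take j))
    (hwin : ∀ f : Fin (Fintype.card V) → V, Function.Bijective f →
      (∀ k : Fin (Fintype.card V), Odd (k : ℕ) →
        f k = σ (List.ofFn fun j : Fin (k : ℕ) => f ⟨j.1, j.isLt.trans k.isLt⟩)) →
      ∀ e : Finset V, E e → ¬ (∀ x ∈ e, ∃ k : Fin (Fintype.card V), Even (k : ℕ) ∧ f k = x))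
    (e : Finset V) (he : E e)
    (hcov : ∀ x ∈ e, ∃ j, ∃ hj : j < P.length, Even j ∧ P[j] = x) : False := by
  have hlt : ∀ k : Fin (Fintype.card V), (k : ℕ) < P.length := fun k => by
    rw [hlen]; exact k.2
  have hbij : Function.Bijective (fun k : Fin (Fintype.card V) => P[(k : ℕ)]'(hlt k)) := by
    rw [Fintype.bijective_iff_injective_and_card]
    exact ⟨fun a b hab => Fin.ext ((hnodup.getElem_inj_iff).mp hab), by simp⟩
  have hofn : List.ofFn (fun k : Fin (Fintype.card V) => P[(k : ℕ)]'(hlt k)) = P := by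
    apply List.ext_getElem
    · simp [hlen]
    · intro i h1 h2
      simp
  refine hwin _ hbij ?_ e he ?_
  · intro k hk
    rw [ofFn_prefix (fun k : Fin (Fintype.card V) => P[(k : ℕ)]'(hlt k)) k, hofn]
    exact hfolP k (hlt k) hk
  · intro x hx
    obtain ⟨j, hj, hev, hPj⟩ := hcov x hx
    exact ⟨⟨j, by omega⟩, hev, hPj⟩

end StealAux


/-- `BreakerWins V E` : Breaker (the second player) has a winning strategy in
the Maker–Breaker game on the finite vertex type `V` whose edges are the
finsets satisfying `E`.  The two players alternately claim previously
unclaimed vertices (Maker moving first, i.e. making the even-indexed moves)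
until all vertices are claimed; a complete play is recorded as a bijection
`f : Fin (card V) → V` listing the moves in order.  Breaker wins the play if
Maker's claimed vertices never include all vertices of an edge, i.e. no edge
is contained in the set of even-indexed moves. -/
def BreakerWins (V : Type) [Fintype V] (E : Finset V → Prop) : Prop :=
  ∃ σ : List V → V,
    -- `σ` is a legal strategy: at any position where it is Breaker's turn
    -- (oddly many moves made, some vertex still unclaimed), it claims an
    -- unclaimed vertex
    (∀ h : List V, h.Nodup → Odd h.length → h.length < Fintype.card V → σ h ∉ h) ∧
    -- in every complete play in which Breaker follows `σ`, Maker's final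
    -- cells (the even-indexed moves) contain no edge
    ∀ f : Fin (Fintype.card V) → V, Function.Bijective f →
      (∀ k : Fin (Fintype.card V), Odd (k : ℕ) →
        f k = σ (List.ofFn fun j : Fin (k : ℕ) => f ⟨j.1, j.isLt.trans k.isLt⟩)) →
      ∀ e : Finset V, E e →
        ¬ (∀ x ∈ e, ∃ k : Fin (Fintype.card V), Even (k : ℕ) ∧ f k = x)

/-- `FirstPreventsSecond V E` : in the alternating claiming game on the finite
vertex type `V` (two players alternately claim previously unclaimed vertices,
the first player moving first, i.e. making the even-indexed moves, until all
vertices are claimed), the first player has a strategy guaranteeing that the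
second player never claims all vertices of any finset satisfying `E`. -/
def FirstPreventsSecond (V : Type) [Fintype V] (E : Finset V → Prop) : Prop :=
  ∃ σ : List V → V,
    -- `σ` is a legal strategy for the first player
    (∀ h : List V, h.Nodup → Even h.length → h.length < Fintype.card V → σ h ∉ h) ∧
    -- in every complete play in which the first player follows `σ`, the
    -- second player's final cells (the odd-indexed moves) contain no edge
    ∀ f : Fin (Fintype.card V) → V, Function.Bijective f →
      (∀ k : Fin (Fintype.card V), Even (k : ℕ) →
        f k = σ (List.ofFn fun j : Fin (k : ℕ) => f ⟨j.1, j.isLt.trans k.isLt⟩)) →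
      ∀ e : Finset V, E e →
        ¬ (∀ x ∈ e, ∃ k : Fin (Fintype.card V), Odd (k : ℕ) ∧ f k = x)

/-- Strategy stealing for drawing strategies: let `H = (V, E)` be a finite
hypergraph with `E` nonempty, and consider the game in which two players
alternately claim previously unclaimed vertices, the first player moving
first, until all vertices are claimed.  If the second player has a strategy
guaranteeing that the first player never claims all vertices of any edge of
`E`, then the first player has a strategy guaranteeing that the second
player never claims all vertices of any edge of `E`. -/
theorem strategy_stealing_draw (V : Type) [Fintype V]
    (E : Finset V → Prop) (hE : ∃ e, E e)
    (h : BreakerWins V E) : FirstPreventsSecond V E := by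
  classical
  obtain ⟨σ, hσleg, hσwin⟩ := h
  by_cases hn : Fintype.card V = 0
  · -- no vertices at all: Breaker's hypothesis is contradictory
    have hempty : IsEmpty V := Fintype.card_eq_zero_iff.mp hn
    have hfin : IsEmpty (Fin (Fintype.card V)) := by rw [hn]; infer_instance
    obtain ⟨e, he⟩ := hE
    exact absurd (fun x (hx : x ∈ e) => hempty.elim x)
      (hσwin (fun k => hfin.elim k) ⟨fun a b _ => hfin.elim a, fun b => hempty.elim b⟩
        (fun k => hfin.elim k) e he)
  · have hpos : 0 < Fintype.card V := Nat.pos_of_ne_zero hn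
    have : Nonempty V := Fintype.card_pos_iff.mp hpos
    -- a fresh-vertex choice function
    have hexfresh : ∀ hst : List V, ∃ v : V, (hst.length < Fintype.card V → v ∉ hst) := by
      intro hst
      by_cases hl : hst.length < Fintype.card V
      · by_contra hc
        push_neg at hc
        have h1 : (Finset.univ : Finset V) ⊆ hst.toFinset := fun v _ =>
          List.mem_toFinset.mpr (hc v).2
        have h2 := Finset.card_le_card h1
        have h3 := hst.toFinset_card_le
        rw [Finset.card_univ] at h2
        omega
      · exact ⟨Classical.arbitrary V, fun hc => absurd hc hl⟩
    choose fresh hfresh using hexfresh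
    refine ⟨StealAux.steal σ fresh,
      fun hst _ _ hlen => StealAux.steal_legal σ fresh (Fintype.card V) hfresh hst hlen, ?_⟩
    intro f hbij hfol e he hcon
    have hinj := hbij.injective
    have hInv := StealAux.invariant σ fresh hσleg hfresh f hinj hfol
    have hlenL : (List.ofFn f).length = Fintype.card V := by simp
    have nodupL : (List.ofFn f).Nodup := List.nodup_ofFn.mpr hinj
    rcases Nat.even_or_odd (Fintype.card V) with hpar | hpar
    · -- even number of vertices: the extra vertex is Breaker's forced last move
      obtain ⟨K, hK⟩ : ∃ K, Fintype.card V = 2*K+2 := by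
        rcases hpar with ⟨r, hr⟩; exact ⟨r-1, by omega⟩
      obtain ⟨im, ex, heq, A, B, C, D, Einv, Finv⟩ := hInv K (by omega)
      have hx1 : 2*K+1 < Fintype.card V := by omega
      have hL1 : 2*K+1 < (List.ofFn f).length := by rw [hlenL]; omega
      have hfull : (List.ofFn f).take (2*K+1) ++ [f ⟨2*K+1, hx1⟩] = List.ofFn f := by
        have h1 := StealAux.take_succ_getElem (List.ofFn f) (2*K+1) hL1
        simp only [List.getElem_ofFn] at h1
        rw [← h1, List.take_of_length_le (by rw [hlenL]; omega)]
      have hxnot : f ⟨2*K+1, hx1⟩ ∉ (List.ofFn f).take (2*K+1) := by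
        have := StealAux.not_mem_take (List.ofFn f) nodupL (2*K+1) hL1
        simp only [List.getElem_ofFn] at this
        exact this
      have himsub : ∀ v ∈ im, v ∈ (List.ofFn f).take (2*K+1) := fun v hv => (D v).mp (Or.inl hv)
      have hexmem : ex ∈ (List.ofFn f).take (2*K+1) := (D ex).mp (Or.inr rfl)
      have hxim : f ⟨2*K+1, hx1⟩ ∉ im := fun hc => hxnot (himsub _ hc)
      have hnodup1 : (im ++ [f ⟨2*K+1, hx1⟩]).Nodup := by
        rw [List.nodup_append]
        exact ⟨B, List.nodup_singleton _, fun a ha b hb hab => by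
          rw [List.mem_singleton] at hb; subst hb; subst hab; exact hxim ha⟩
      have hlen1 : (im ++ [f ⟨2*K+1, hx1⟩]).length = 2*K+1 := by simp [A]
      have hynot : σ (im ++ [f ⟨2*K+1, hx1⟩]) ∉ im ++ [f ⟨2*K+1, hx1⟩] :=
        hσleg _ hnodup1 (by rw [hlen1]; exact ⟨K, by omega⟩) (by rw [hlen1]; omega)
      -- the strategy's final answer is forced to be the extra vertex
      have hyex : σ (im ++ [f ⟨2*K+1, hx1⟩]) = ex := by
        obtain ⟨ky, hky⟩ := hbij.surjective (σ (im ++ [f ⟨2*K+1, hx1⟩]))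
        have hymem : σ (im ++ [f ⟨2*K+1, hx1⟩]) ∈ List.ofFn f :=
          List.mem_ofFn.mpr ⟨ky, hky⟩
        rw [← hfull] at hymem
        rcases List.mem_append.mp hymem with hy' | hy'
        · rcases (D _).mpr hy' with hy'' | hy''
          · exact absurd (List.mem_append.mpr (Or.inl hy'')) hynot
          · exact hy''
        · rw [List.mem_singleton] at hy'
          exact absurd (List.mem_append.mpr (Or.inr (by rw [hy']; simp))) hynot
      -- the complete imagined play
      refine StealAux.finish E σ ((im ++ [f ⟨2*K+1, hx1⟩]) ++ [ex]) ?_ ?_ ?_ hσwin e he ?_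
      · rw [List.nodup_append]
        refine ⟨hnodup1, List.nodup_singleton _, fun a ha b hb hab => ?_⟩
        rw [List.mem_singleton] at hb
        subst hb hab
        rcases List.mem_append.mp ha with ha' | ha'
        · exact C ha'
        · rw [List.mem_singleton] at ha'
          exact hxnot (ha' ▸ hexmem)
      · simp only [List.length_append, List.length_cons, List.length_nil, A]; omega
      · intro j hj hodd
        simp only [List.length_append, List.length_cons, List.length_nil, A] at hj
        by_cases hj1 : j < im.length
        · rw [List.getElem_append_left (by rw [hlen1]; omega),
            List.take_append_of_le_length (by rw [hlen1]; omega)]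
          rw [List.getElem_append_left hj1, List.take_append_of_le_length (le_of_lt hj1)]
          exact Einv j hj1 hodd
        · have hj2 : j = 2*K+1 := by rcases hodd with ⟨t, ht⟩; omega
          subst hj2
          rw [List.getElem_append_right (by rw [hlen1]),
            List.take_append_of_le_length (by rw [hlen1]),
            List.take_of_length_le (le_of_eq hlen1)]
          simp only [hlen1, Nat.sub_self, List.getElem_cons_zero]
          exact hyex.symm
      · intro x hx
        obtain ⟨k, hkodd, hkx⟩ := hcon x hx
        obtain ⟨t, ht⟩ := hkodd
        have hk2 := k.2
        by_cases hklast : (k : ℕ) = 2*K+1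
        · refine ⟨2*K, ?_, ⟨K, by omega⟩, ?_⟩
          · simp only [List.length_append, List.length_cons, List.length_nil, A]; omega
          rw [List.getElem_append_left (by rw [hlen1]; omega),
            List.getElem_append_right (by omega)]
          simp only [A, Nat.sub_self, List.getElem_cons_zero]
          rw [← hkx]
          congr 1
          exact Fin.ext (show 2*K+1 = (k : ℕ) by omega)
        · have hk3 : (k : ℕ) - 1 < im.length := by omega
          refine ⟨(k : ℕ) - 1, ?_, ⟨t, by omega⟩, ?_⟩
          · simp only [List.length_append, List.length_cons, List.length_nil, A]; omega
          rw [List.getElem_append_left (by rw [hlen1]; omega),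
            List.getElem_append_left hk3]
          rw [Finv ((k : ℕ) - 1) hk3 ⟨t, by omega⟩ (by omega), ← hkx]
          congr 1
          exact Fin.ext (show (k : ℕ) - 1 + 1 = (k : ℕ) by omega)
    · -- odd number of vertices: the first player makes the harmless last move
      obtain ⟨M, hM⟩ := hpar
      obtain ⟨im, ex, heq, A, B, C, D, Einv, Finv⟩ := hInv M (by omega)
      refine StealAux.finish E σ (im ++ [ex]) ?_ ?_ ?_ hσwin e he ?_
      · rw [List.nodup_append]
        exact ⟨B, List.nodup_singleton _, fun a ha b hb hab => by
          rw [List.mem_singleton] at hb; subst hb; subst hab; exact C ha⟩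
      · simp only [List.length_append, List.length_cons, List.length_nil, A]; omega
      · intro j hj hodd
        simp only [List.length_append, List.length_cons, List.length_nil, A] at hj
        have hj1 : j < im.length := by rcases hodd with ⟨t, ht⟩; omega
        rw [List.getElem_append_left hj1, List.take_append_of_le_length (le_of_lt hj1)]
        exact Einv j hj1 hodd
      · intro x hx
        obtain ⟨k, hkodd, hkx⟩ := hcon x hx
        obtain ⟨t, ht⟩ := hkodd
        have hk2 := k.2
        have hk3 : (k : ℕ) - 1 < im.length := by omega
        refine ⟨(k : ℕ) - 1, ?_, ⟨t, by omega⟩, ?_⟩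
        · simp only [List.length_append, List.length_cons, List.length_nil, A]; omega
        rw [List.getElem_append_left hk3]
        rw [Finv ((k : ℕ) - 1) hk3 ⟨t, by omega⟩ (by omega), ← hkx]
        congr 1
        exact Fin.ext (show (k : ℕ) - 1 + 1 = (k : ℕ) by omega)
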